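/- The abelian group ℝ with zero removed can be partitioned into countably many independent subsets (where A is independent if n₁a₁+⋯+nₖaₖ = 0 with distinct aᵢ ∈ A and integers nᵢ implies nᵢaᵢ = 0 for all i) if and only if the Continuum Hypothesis holds. -/

import Mathlib

/-- Independence of a subset of an abelian group in the sense of Fuchs:
`Σ nᵢ • aᵢ = 0` with distinct `aᵢ` implies each `nᵢ • aᵢ = 0`. -/
def LinIndepSet {G : Type*} [AddCommGroup G] (A : Set G) : Prop :=
  ∀ (s : Finset G), ↑s ⊆ A → ∀ l : G → ℤ,
    ∑ a ∈ s, l a • a = 0 → ∀ a ∈ s, l a • a = 0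

open Cardinal

lemma countable_span' {s : Set ℝ} (hs : s.Countable) :
    (Submodule.span ℚ s : Set ℝ).Countable := by
  haveI := hs.to_subtype
  have h : (Submodule.span ℚ s : Set ℝ) =
      Set.range (fun f : (↥s →₀ ℚ) => Finsupp.linearCombination ℚ ((↑) : ↥s → ℝ) f) := by
    rw [← LinearMap.coe_range, Finsupp.range_linearCombination, Subtype.range_coe]
  rw [h]
  exact Set.countable_range _

lemma indep_finset {S : Set ℝ} (hS : LinearIndependent ℚ ((↑) : S → ℝ))
    {t : Finset ℝ} (ht : ↑t ⊆ S) {q : ℝ → ℚ} (hsum : ∑ x ∈ t, q x • x = 0) :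
    ∀ x ∈ t, q x = 0 := by
  have h1 : LinearIndependent ℚ ((↑) : (↑t : Set ℝ) → ℝ) := LinearIndepOn.mono (R := ℚ) (v := id) hS ht
  have h2 := Fintype.linearIndependent_iff.mp h1 (fun i => q i)
  have h3 : ∑ i : (↑t : Set ℝ), q (i : ℝ) • (i : ℝ) = 0 := by
    rw [Finset.univ_eq_attach]
    exact (Finset.sum_attach t (fun x => q x • x)).trans hsum
  intro x hx
  exact h2 h3 ⟨x, hx⟩

lemma pair_add_ne_zero {S : Set ℝ} (hS : LinearIndependent ℚ ((↑) : S → ℝ))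
    {u v : ℝ} (hu : u ∈ S) (hv : v ∈ S) (huv : u ≠ v) : u + v ≠ 0 := by
  intro h
  classical
  have hsum : ∑ x ∈ ({u, v} : Finset ℝ), (1 : ℚ) • x = 0 := by
    rw [Finset.sum_insert (by simp [huv]), Finset.sum_singleton]
    simpa using h
  have := indep_finset hS (t := {u, v}) (by
    intro x hx; simp at hx; rcases hx with rfl | rfl <;> assumption) (q := fun _ => 1) hsum u
      (by simp)
  simpa using this

lemma four_add_ne {S : Set ℝ} (hS : LinearIndependent ℚ ((↑) : S → ℝ))
    {u v y z : ℝ} (hu : u ∈ S) (hv : v ∈ S) (hy : y ∈ S) (hz : z ∈ S)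
    (huv : u ≠ v) (huy : u ≠ y) (huz : u ≠ z) (hvy : v ≠ y) (hvz : v ≠ z) (hyz : y ≠ z) :
    u + v ≠ y + z := by
  intro h
  classical
  set q : ℝ → ℚ := fun x => if x = u ∨ x = v then 1 else -1 with hq
  have hsum : ∑ x ∈ ({u, v, y, z} : Finset ℝ), q x • x = 0 := by
    rw [Finset.sum_insert (by simp [huv, huy, huz]),
      Finset.sum_insert (by simp [hvy, hvz]),
      Finset.sum_insert (by simp [hyz]), Finset.sum_singleton]
    have q1 : q u = 1 := by simp [hq]
    have q2 : q v = 1 := by simp [hq]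
    have q3 : q y = -1 := by simp [hq, huy.symm, hvy.symm]
    have q4 : q z = -1 := by simp [hq, huz.symm, hvz.symm]
    rw [q1, q2, q3, q4]
    simp only [one_smul, neg_smul]
    linarith
  have := indep_finset hS (t := {u, v, y, z}) (by
    intro x hx; simp at hx; rcases hx with rfl | rfl | rfl | rfl <;> assumption) hsum u (by simp)
  simp [hq] at this


lemma dir1 (c : ℕ → Set ℝ) (hind : ∀ i, LinIndepSet (c i))
    (hU : (⋃ i, c i) = {x : ℝ | x ≠ 0}) : Cardinal.continuum.{0} = Cardinal.aleph.{0} 1 := by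
  classical
  by_contra hne
  have h1 : (ℵ₁ : Cardinal.{0}) < 𝔠 := lt_of_le_of_ne Cardinal.aleph_one_le_continuum
    (fun h => hne h.symm)
  have h2 : Cardinal.aleph 2 ≤ Module.rank ℚ ℝ := by
    rw [Real.rank_rat_real, ← Ordinal.succ_one, Cardinal.aleph_succ]
    exact Order.succ_le_of_lt h1
  obtain ⟨S, hScard, hSind⟩ := le_rank_iff_exists_linearIndependent.mp h2
  have halephlt : (ℵ₁ : Cardinal.{0}) < Cardinal.aleph 2 := by
    rw [← Ordinal.succ_one, Cardinal.aleph_succ]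
    exact Order.lt_succ _
  have hS1 : (ℵ₁ : Cardinal.{0}) ≤ #S := by rw [hScard]; exact le_of_lt halephlt
  obtain ⟨I, hIS, hIcard⟩ := Cardinal.le_mk_iff_exists_subset.mp hS1
  set J : Set ℝ := S \ I with hJdef
  have hJ : ¬ (#J ≤ (ℵ₁ : Cardinal.{0})) := by
    intro hJle
    have hcup : I ∪ J = S := Set.union_diff_cancel hIS
    have : #S ≤ ℵ₁ := by
      calc #S = #(↥(I ∪ J)) := by rw [hcup]
        _ ≤ #I + #J := Cardinal.mk_union_le _ _
        _ ≤ ℵ₁ + ℵ₁ := by rw [hIcard]; exact add_le_add le_rfl hJle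
        _ = ℵ₁ := by
            rw [Cardinal.add_eq_max (le_of_lt Cardinal.aleph0_lt_aleph_one), max_self]
    rw [hScard] at this
    exact absurd this (not_le.mpr halephlt)
  -- coloring
  have hcolex : ∀ x : ℝ, ∃ n, x ≠ 0 → x ∈ c n := by
    intro x
    by_cases hx : x = 0
    · exact ⟨0, fun h => absurd hx h⟩
    · have : x ∈ ⋃ i, c i := by rw [hU]; exact hx
      obtain ⟨n, hn⟩ := Set.mem_iUnion.mp this
      exact ⟨n, fun _ => hn⟩
  choose col hcol using hcolex
  -- distinctness facts
  have hJS : J ⊆ S := Set.diff_subset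
  have hIJ : ∀ ⦃i : ℝ⦄, i ∈ I → ∀ ⦃j : ℝ⦄, j ∈ J → i ≠ j := by
    rintro i hi j hj rfl
    exact hj.2 hi
  -- key: for each j, two distinct i's with equal color
  have key : ∀ j : ↥J, ∃ p : ↥I × ↥I × ℕ, p.1 ≠ p.2.1 ∧
      col ((p.1 : ℝ) + (j : ℝ)) = p.2.2 ∧ col ((p.2.1 : ℝ) + (j : ℝ)) = p.2.2 := by
    intro j
    have hninj : ¬ Function.Injective (fun i : ↥I => col ((i : ℝ) + (j : ℝ))) := by
      intro hinj
      have := Cardinal.mk_le_of_injective hinj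
      rw [hIcard, Cardinal.mk_nat] at this
      exact absurd this (not_le.mpr Cardinal.aleph0_lt_aleph_one)
    obtain ⟨i₁, i₂, heq, hne'⟩ := Function.not_injective_iff.mp hninj
    exact ⟨(i₁, i₂, col ((i₁ : ℝ) + (j : ℝ))), hne', rfl, heq.symm⟩
  choose F hF1 hF2 hF3 using key
  have hFninj : ¬ Function.Injective F := by
    intro hinj
    have := Cardinal.mk_le_of_injective hinj
    have hcard : #(↥I × ↥I × ℕ) = ℵ₁ := by
      simp only [Cardinal.mk_prod, Cardinal.lift_id, hIcard, Cardinal.mk_nat]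
      rw [Cardinal.mul_eq_max (le_of_lt Cardinal.aleph0_lt_aleph_one) le_rfl,
        max_eq_left (le_of_lt Cardinal.aleph0_lt_aleph_one),
        Cardinal.mul_eq_max (le_of_lt Cardinal.aleph0_lt_aleph_one)
          (le_of_lt Cardinal.aleph0_lt_aleph_one), max_self]
    rw [hcard] at this
    exact hJ this
  obtain ⟨j₁, j₂, hFeq, hjne⟩ := Function.not_injective_iff.mp hFninj
  set u : ℝ := ((F j₁).1 : ℝ) with hu
  set v : ℝ := ((F j₁).2.1 : ℝ) with hv
  set n : ℕ := (F j₁).2.2 with hn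
  have huI : u ∈ I := (F j₁).1.2
  have hvI : v ∈ I := (F j₁).2.1.2
  have huv : u ≠ v := fun h => hF1 j₁ (by ext; exact h)
  have hj1J : (j₁ : ℝ) ∈ J := j₁.2
  have hj2J : (j₂ : ℝ) ∈ J := j₂.2
  have hjne' : (j₁ : ℝ) ≠ (j₂ : ℝ) := fun h => hjne (by ext; exact h)
  have hcol1 : col (u + (j₁ : ℝ)) = n := hF2 j₁
  have hcol2 : col (v + (j₁ : ℝ)) = n := hF3 j₁
  have hcol3 : col (u + (j₂ : ℝ)) = n := by
    have := hF2 j₂; rw [← hFeq] at this; exact this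
  have hcol4 : col (v + (j₂ : ℝ)) = n := by
    have := hF3 j₂; rw [← hFeq] at this; exact this
  -- memberships in S and distinctness
  have huS : u ∈ S := hIS huI
  have hvS : v ∈ S := hIS hvI
  have hj1S : (j₁ : ℝ) ∈ S := hJS hj1J
  have hj2S : (j₂ : ℝ) ∈ S := hJS hj2J
  have huj1 : u ≠ (j₁ : ℝ) := hIJ huI hj1J
  have huj2 : u ≠ (j₂ : ℝ) := hIJ huI hj2J
  have hvj1 : v ≠ (j₁ : ℝ) := hIJ hvI hj1J
  have hvj2 : v ≠ (j₂ : ℝ) := hIJ hvI hj2J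
  set a : ℝ := u + (j₁ : ℝ) with ha
  set b : ℝ := v + (j₂ : ℝ) with hb
  set d : ℝ := u + (j₂ : ℝ) with hd
  set e : ℝ := v + (j₁ : ℝ) with he
  have ha0 : a ≠ 0 := pair_add_ne_zero hSind huS hj1S huj1
  have hb0 : b ≠ 0 := pair_add_ne_zero hSind hvS hj2S hvj2
  have hd0 : d ≠ 0 := pair_add_ne_zero hSind huS hj2S huj2
  have he0 : e ≠ 0 := pair_add_ne_zero hSind hvS hj1S hvj1
  have hab : a ≠ b := four_add_ne hSind huS hj1S hvS hj2S
    huj1 huv huj2 (Ne.symm hvj1) hjne' hvj2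
  have hde : d ≠ e := four_add_ne hSind huS hj2S hvS hj1S
    huj2 huv huj1 (Ne.symm hvj2) (Ne.symm hjne') hvj1
  have had : a ≠ d := fun h => hjne' (add_left_cancel h)
  have hae : a ≠ e := fun h => huv (add_right_cancel h)
  have hbd : b ≠ d := fun h => huv (add_right_cancel h).symm
  have hbe : b ≠ e := fun h => hjne' (add_left_cancel h).symm
  -- memberships in c n
  have hmema : a ∈ c n := by rw [← hcol1]; exact hcol a ha0
  have hmemb : b ∈ c n := by rw [← hcol4]; exact hcol b hb0
  have hmemd : d ∈ c n := by rw [← hcol3]; exact hcol d hd0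
  have hmeme : e ∈ c n := by rw [← hcol2]; exact hcol e he0
  -- apply independence
  set l : ℝ → ℤ := fun x => if x = a ∨ x = b then 1 else -1 with hl
  have hsum : ∑ x ∈ ({a, b, d, e} : Finset ℝ), l x • x = 0 := by
    rw [Finset.sum_insert (by simp [hab, had, hae]),
      Finset.sum_insert (by simp [hbd, hbe]),
      Finset.sum_insert (by simp [hde]), Finset.sum_singleton]
    have l1 : l a = 1 := by simp [hl]
    have l2 : l b = 1 := by simp [hl]
    have l3 : l d = -1 := by simp [hl, had.symm, hbd.symm]
    have l4 : l e = -1 := by simp [hl, hae.symm, hbe.symm]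
    rw [l1, l2, l3, l4]
    simp only [one_smul, neg_smul]
    rw [ha, hb, hd, he]; ring
  have := hind n ({a, b, d, e} : Finset ℝ) (by
    intro x hx; simp at hx; rcases hx with rfl | rfl | rfl | rfl <;> assumption)
    l hsum a (by simp)
  rw [show l a = 1 by simp [hl]] at this
  simp at this
  exact ha0 this

lemma dir2 (hCH : Cardinal.continuum.{0} = Cardinal.aleph.{0} 1) :
    ∃ c : ℕ → Set ℝ, (∀ i, LinIndepSet (c i)) ∧ Pairwise (Function.onFun Disjoint c) ∧
      (⋃ i, c i) = {x : ℝ | x ≠ 0} := by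
  classical
  set O := (Cardinal.aleph.{0} 1).ord.ToType with hO
  have hmk : #O = Cardinal.aleph 1 := by rw [Cardinal.mk_toType, Cardinal.card_ord]
  have hmk2 : #ℝ = #O := by rw [Cardinal.mk_real, hCH, hmk]
  obtain ⟨req⟩ := Cardinal.eq.mp hmk2
  set r : O → ℝ := ⇑req.symm with hr
  set S : O → Submodule ℚ ℝ := fun o => Submodule.span ℚ (r '' Set.Iic o) with hS
  have hSc : ∀ o, ((S o : Set ℝ)).Countable := by
    intro o
    apply countable_span'
    apply Set.Countable.image
    rw [← Set.Iio_insert]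
    exact Set.Countable.insert _
      ((Cardinal.countable_iff_lt_aleph_one _).mpr (Cardinal.mk_Iio_ord_toType o))
  have hex : ∀ x : ℝ, x ∈ S (req x) := by
    intro x
    apply Submodule.subset_span
    exact ⟨req x, Set.self_mem_Iic, by simp [hr]⟩
  have hwf : WellFounded ((· < ·) : O → O → Prop) := wellFounded_lt
  set lev : ℝ → O := fun x => hwf.min {o | x ∈ S o} ⟨req x, hex x⟩ with hlevdef
  have hlev1 : ∀ x, x ∈ S (lev x) := fun x =>
    hwf.min_mem {o | x ∈ S o} ⟨req x, hex x⟩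
  have hlev2 : ∀ x o, o < lev x → x ∉ S o := fun x o holt hmem =>
    hwf.not_lt_min {o | x ∈ S o} hmem holt
  have hginj : ∀ o : O, ∃ g : ℝ → ℕ, Set.InjOn g (S o) :=
    fun o => Set.countable_iff_exists_injOn.mp (hSc o)
  choose g hg using hginj
  set c : ℕ → Set ℝ := fun n => {x | x ≠ 0 ∧ g (lev x) x = n} with hc
  refine ⟨c, ?_, ?_, ?_⟩
  · -- independence
    intro n s hs l hsum
    by_contra hcontra
    push_neg at hcontra
    obtain ⟨a0, ha0s, ha0⟩ := hcontra
    set t := s.filter (fun x => l x • x ≠ 0) with htdef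
    have htne : t.Nonempty := ⟨a0, Finset.mem_filter.mpr ⟨ha0s, ha0⟩⟩
    have hts : ∀ x ∈ t, x ∈ c n := fun x hx => hs (Finset.mem_filter.mp hx).1
    have hsum' : ∑ x ∈ t, l x • x = 0 := by
      rw [htdef, Finset.sum_filter_ne_zero]; exact hsum
    obtain ⟨amax, hamax, hmax⟩ := Finset.exists_max_image t lev htne
    have hlevinj : ∀ x ∈ t, ∀ y ∈ t, lev x = lev y → x = y := by
      intro x hx y hy hl
      have hxc := hts x hx
      have hyc := hts y hy
      refine hg (lev x) (hlev1 x) (hl ▸ hlev1 y) ?_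
      rw [hxc.2]
      rw [hl, hyc.2]
    have hlt : ∀ x ∈ t, x ≠ amax → lev x < lev amax := fun x hx hne =>
      lt_of_le_of_ne (hmax x hx) (fun h => hne (hlevinj x hx amax hamax h))
    set T : Submodule ℚ ℝ := Submodule.span ℚ (r '' Set.Iio (lev amax)) with hT
    have hTx : ∀ x ∈ t.erase amax, (x : ℝ) ∈ T := by
      intro x hx
      obtain ⟨hxne, hxt⟩ := Finset.mem_erase.mp hx
      have h1 : lev x < lev amax := hlt x hxt hxne
      have h2 : S (lev x) ≤ T :=
        Submodule.span_mono (Set.image_mono (fun p hp => lt_of_le_of_lt hp h1))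
      exact h2 (hlev1 x)
    have hsmul : l amax • amax ∈ T := by
      have heq : l amax • amax = - ∑ x ∈ t.erase amax, l x • x := by
        have h3 := Finset.sum_erase_add t (fun x => l x • x) hamax
        rw [hsum'] at h3
        exact eq_neg_of_add_eq_zero_right h3
      rw [heq]
      refine Submodule.neg_mem _ (Submodule.sum_mem _ (fun x hx => ?_))
      rw [← Int.cast_smul_eq_zsmul ℚ]
      exact T.smul_mem _ (hTx x hx)
    have hlamax : l amax ≠ 0 := by
      have h4 := (Finset.mem_filter.mp hamax).2
      intro h; apply h4; rw [h, zero_smul]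
    have hamaxT : amax ∈ T := by
      have h2 : ((l amax : ℚ)) • amax ∈ T := by
        rw [Int.cast_smul_eq_zsmul]; exact hsmul
      have h3 := T.smul_mem ((l amax : ℚ))⁻¹ h2
      rw [smul_smul, inv_mul_cancel₀ (by exact_mod_cast hlamax), one_smul] at h3
      exact h3
    obtain ⟨t', ht'sub, ht'span⟩ := Submodule.mem_span_finite_of_mem_span hamaxT
    rcases Finset.eq_empty_or_nonempty t' with rfl | ht'ne
    · simp only [Finset.coe_empty, Submodule.span_empty, Submodule.mem_bot] at ht'span
      exact (hts amax hamax).1 ht'span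
    · have hPne : (t'.image (fun y => req y)).Nonempty := ht'ne.image _
      set P : Finset O := t'.image (fun y => req y) with hP
      have hp₀mem := P.max'_mem hPne
      have hp₀lt : P.max' hPne < lev amax := by
        obtain ⟨y, hyt', hyeq⟩ := Finset.mem_image.mp hp₀mem
        obtain ⟨q, hq, hqe⟩ := ht'sub hyt'
        rw [← hyeq, ← hqe]
        simpa [hr] using hq
      have hsub2 : (↑t' : Set ℝ) ⊆ r '' Set.Iic (P.max' hPne) := by
        intro y hy
        refine ⟨req y, ?_, by simp [hr]⟩
        exact Finset.le_max' P (req y) (Finset.mem_image_of_mem _ hy)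
      have hfin : amax ∈ S (P.max' hPne) := Submodule.span_mono hsub2 ht'span
      exact hlev2 amax (P.max' hPne) hp₀lt hfin
  · -- pairwise disjoint
    intro m n' hmn
    rw [Function.onFun, Set.disjoint_left]
    intro x hxm hxn
    exact hmn (hxm.2.symm.trans hxn.2)
  · -- union
    ext x
    simp only [Set.mem_iUnion, Set.mem_setOf_eq, hc]
    constructor
    · rintro ⟨i, hxi, _⟩; exact hxi
    · intro hx; exact ⟨g (lev x) x, hx, rfl⟩

open Cardinal in
theorem stmt17 :
    (∃ c : ℕ → Set ℝ, (∀ i, LinIndepSet (c i)) ∧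
        Pairwise (Function.onFun Disjoint c) ∧
        (⋃ i, c i) = {x : ℝ | x ≠ 0}) ↔
      Cardinal.continuum = Cardinal.aleph 1 := by
  constructor
  · rintro ⟨c, h1, _h2, h3⟩
    have h0 := dir1 c h1 h3
    have h4 : Cardinal.lift (Cardinal.continuum.{0}) = Cardinal.lift (Cardinal.aleph.{0} 1) := by
      rw [h0]
    rwa [Cardinal.lift_continuum, Cardinal.lift_aleph, Ordinal.lift_one] at h4
  · intro h
    apply dir2
    have h4 : Cardinal.lift Cardinal.continuum.{0} = Cardinal.lift (Cardinal.aleph.{0} 1) := by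
      rw [Cardinal.lift_continuum, Cardinal.lift_aleph, Ordinal.lift_one]
      exact h
    exact Cardinal.lift_inj.mp h4
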